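/- Let D ≥ 1 and let T_{αβγ} be a smooth totally symmetric tensor field on ℝ^D, with spin-3 curvature R_{α₁β₁α₂β₂α₃β₃} := Σ_{(s₁,s₂,s₃)∈{0,1}³} (−1)^{s₁+s₂+s₃} ∂_{c₁}∂_{c₂}∂_{c₃} T_{d₁d₂d₃}, where (c_i, d_i) = (α_i, β_i) if s_i = 0 and (β_i, α_i) if s_i = 1. Then R satisfies the second Bianchi identity: ∂_λ R_{α₁β₁α₂β₂α₃β₃} + ∂_{α₁} R_{β₁λα₂β₂α₃β₃} + ∂_{β₁} R_{λα₁α₂β₂α₃β₃} = 0 identically on ℝ^D for all indices. -/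

import Mathlib

/-- The partial derivative `∂_μ f` of a function `f : ℝ^D → ℝ`. -/
noncomputable def pd {D : ℕ} (μ : Fin D) (f : (Fin D → ℝ) → ℝ) : (Fin D → ℝ) → ℝ :=
  fun x => fderiv ℝ f x (Pi.single μ 1)

/-- Sign `(−1)^s` attached to `s ∈ {0,1}`, with `false ↦ 1` and `true ↦ −1`. -/
def bsign (s : Bool) : ℝ := if s then -1 else 1

/-- The upper index of the pair `(c, d)`: `(c,d) = (a,b)` if `s = 0` and `(b,a)` if `s = 1`. -/
def bfst {D : ℕ} (s : Bool) (a b : Fin D) : Fin D := if s then b else a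

/-- The lower index of the pair `(c, d)`: `(c,d) = (a,b)` if `s = 0` and `(b,a)` if `s = 1`. -/
def bsnd {D : ℕ} (s : Bool) (a b : Fin D) : Fin D := if s then a else b

/-- The spin-3 curvature of a rank-3 tensor field `T` on `ℝ^D`:
`R[T]_{α₁β₁α₂β₂α₃β₃} = Σ_{(s₁,s₂,s₃)∈{0,1}³} (−1)^{s₁+s₂+s₃} ∂_{c₁}∂_{c₂}∂_{c₃} T_{d₁d₂d₃}`,
i.e. `∂_{α₁}∂_{α₂}∂_{α₃} T_{β₁β₂β₃}` antisymmetrized in each pair `(α_i, β_i)`. -/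
noncomputable def spin3Curv {D : ℕ} (T : Fin D → Fin D → Fin D → (Fin D → ℝ) → ℝ)
    (α₁ β₁ α₂ β₂ α₃ β₃ : Fin D) : (Fin D → ℝ) → ℝ := fun x =>
  ∑ s : Bool × Bool × Bool,
    (bsign s.1 * bsign s.2.1 * bsign s.2.2) *
      pd (bfst s.1 α₁ β₁) (pd (bfst s.2.1 α₂ β₂) (pd (bfst s.2.2 α₃ β₃)
        (T (bsnd s.1 α₁ β₁) (bsnd s.2.1 α₂ β₂) (bsnd s.2.2 α₃ β₃)))) x

lemma pd_smooth {D : ℕ} (μ : Fin D) {f : (Fin D → ℝ) → ℝ}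
    (hf : ContDiff ℝ (⊤ : ℕ∞) f) : ContDiff ℝ (⊤ : ℕ∞) (pd μ f) := by
  have h1 : ContDiff ℝ (⊤ : ℕ∞) (fderiv ℝ f) := hf.fderiv_right (by simp)
  exact h1.clm_apply contDiff_const

lemma pd_comm {D : ℕ} (μ ν : Fin D) {f : (Fin D → ℝ) → ℝ}
    (hf : ContDiff ℝ (⊤ : ℕ∞) f) (x : Fin D → ℝ) :
    pd μ (pd ν f) x = pd ν (pd μ f) x := by
  have hdf : ContDiff ℝ (⊤ : ℕ∞) (fderiv ℝ f) := hf.fderiv_right (by simp)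
  have hsymm : IsSymmSndFDerivAt ℝ f x := by
    apply hf.contDiffAt.isSymmSndFDerivAt
    rw [minSmoothness_of_isRCLikeNormedField]
    exact (WithTop.coe_le_coe.mpr le_top : ((2:ℕ∞):WithTop ℕ∞) ≤ _)
  have key : ∀ a b : Fin D, pd a (pd b f) x
      = fderiv ℝ (fderiv ℝ f) x (Pi.single a 1) (Pi.single b 1) := by
    intro a b
    have hd : DifferentiableAt ℝ (fderiv ℝ f) x := by
      apply (hdf.differentiable ?_) x
      simp
    have := fderiv_clm_apply (c := fderiv ℝ f) (u := fun _ => (Pi.single b 1 : Fin D → ℝ))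
      (x := x) hd (differentiableAt_const _)
    have e2 : pd b f = fun y => (fderiv ℝ f y) ((fun _ => (Pi.single b 1 : Fin D → ℝ)) y) := rfl
    rw [pd, e2, this]
    simp
  rw [key, key, hsymm]

lemma pd_sum {D : ℕ} {I : Type*} [Fintype I] (μ : Fin D) (c : I → ℝ)
    (f : I → (Fin D → ℝ) → ℝ) (hf : ∀ i, ContDiff ℝ (⊤ : ℕ∞) (f i)) (x : Fin D → ℝ) :
    pd μ (fun y => ∑ i, c i * f i y) x = ∑ i, c i * pd μ (f i) x := by
  have hd : ∀ i, DifferentiableAt ℝ (f i) x := fun i => by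
    apply ((hf i).differentiable ?_) x
    simp
  unfold pd
  rw [fderiv_fun_sum (fun i _ => (hd i).const_mul (c i))]
  simp only [ContinuousLinearMap.coe_sum', Finset.sum_apply]
  refine Finset.sum_congr rfl fun i _ => ?_
  rw [fderiv_const_mul (hd i)]
  simp

/-- The spin-3 curvature of a smooth totally symmetric tensor field satisfies the
second Bianchi identity
`∂_λ R_{α₁β₁α₂β₂α₃β₃} + ∂_{α₁} R_{β₁λα₂β₂α₃β₃} + ∂_{β₁} R_{λα₁α₂β₂α₃β₃} = 0`. -/
theorem spin_three_curvature_second_bianchi (D : ℕ) (hD : 1 ≤ D)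
    (T : Fin D → Fin D → Fin D → (Fin D → ℝ) → ℝ)
    (hsmooth : ∀ α β γ, ContDiff ℝ (⊤ : ℕ∞) (T α β γ))
    (hTsym₁ : ∀ α β γ, T α β γ = T β α γ)
    (hTsym₂ : ∀ α β γ, T α β γ = T α γ β) :
    ∀ lam α₁ β₁ α₂ β₂ α₃ β₃ x,
      pd lam (spin3Curv T α₁ β₁ α₂ β₂ α₃ β₃) x
        + pd α₁ (spin3Curv T β₁ lam α₂ β₂ α₃ β₃) x
        + pd β₁ (spin3Curv T lam α₁ α₂ β₂ α₃ β₃) x = 0 := by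
  intro lam α₁ β₁ α₂ β₂ α₃ β₃ x
  set K : Bool → Bool → Fin D → (Fin D → ℝ) → ℝ := fun s₂ s₃ d =>
    pd (bfst s₂ α₂ β₂) (pd (bfst s₃ α₃ β₃) (T d (bsnd s₂ α₂ β₂) (bsnd s₃ α₃ β₃))) with hK
  have hKsm : ∀ s₂ s₃ d, ContDiff ℝ (⊤ : ℕ∞) (K s₂ s₃ d) := fun s₂ s₃ d =>
    pd_smooth _ (pd_smooth _ (hsmooth _ _ _))
  set G : Fin D → (Fin D → ℝ) → ℝ := fun d y =>
    ∑ t : Bool × Bool, (bsign t.1 * bsign t.2) * K t.1 t.2 d y with hG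
  have hGsm : ∀ d, ContDiff ℝ (⊤ : ℕ∞) (G d) := by
    intro d
    apply ContDiff.sum
    intro t _
    exact (hKsm t.1 t.2 d).const_smul (bsign t.1 * bsign t.2)
  have hpdG : ∀ (a b : Fin D) y, pd a (G b) y
      = ∑ t : Bool × Bool, (bsign t.1 * bsign t.2) * pd a (K t.1 t.2 b) y :=
    fun a b y => pd_sum a (fun t : Bool × Bool => bsign t.1 * bsign t.2)
      (fun t : Bool × Bool => K t.1 t.2 b) (fun t => hKsm t.1 t.2 b) y
  have hcurv : ∀ a b : Fin D, spin3Curv T a b α₂ β₂ α₃ β₃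
      = fun y => pd a (G b) y - pd b (G a) y := by
    intro a b
    funext y
    show (∑ s : Bool × Bool × Bool,
        (bsign s.1 * bsign s.2.1 * bsign s.2.2) *
          pd (bfst s.1 a b) (K s.2.1 s.2.2 (bsnd s.1 a b)) y) = _
    rw [Fintype.sum_prod_type, Fintype.sum_bool, hpdG a b y, hpdG b a y]
    simp only [Fintype.sum_prod_type, Fintype.sum_bool, bsign, bfst, bsnd,
      Bool.false_eq_true, if_true, if_false]
    ring
  have pd_sub' : ∀ (μ : Fin D) (f g : (Fin D → ℝ) → ℝ), ContDiff ℝ (⊤:ℕ∞) f →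
      ContDiff ℝ (⊤:ℕ∞) g → ∀ y, pd μ (fun z => f z - g z) y = pd μ f y - pd μ g y := by
    intro μ f g hf hg y
    have h1 : DifferentiableAt ℝ f y := by
      apply (hf.differentiable ?_) y
      simp
    have h2 : DifferentiableAt ℝ g y := by
      apply (hg.differentiable ?_) y
      simp
    unfold pd
    rw [fderiv_fun_sub h1 h2]
    simp
  rw [hcurv α₁ β₁, hcurv β₁ lam, hcurv lam α₁]
  rw [pd_sub' lam _ _ (pd_smooth _ (hGsm β₁)) (pd_smooth _ (hGsm α₁)) x,
      pd_sub' α₁ _ _ (pd_smooth _ (hGsm lam)) (pd_smooth _ (hGsm β₁)) x,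
      pd_sub' β₁ _ _ (pd_smooth _ (hGsm α₁)) (pd_smooth _ (hGsm lam)) x]
  rw [pd_comm lam α₁ (hGsm β₁) x, pd_comm lam β₁ (hGsm α₁) x, pd_comm α₁ β₁ (hGsm lam) x]
  ring
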